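/- Let f : G → ℂ be continuous with compact support, let φ : G → V be a continuous Γ-equivariant function, and let F ⊆ G be a measurable fundamental domain for the left translation action of Γ on G. Then for every x ∈ G, ∫_G f(y) φ(xy) dμ(y) = ∫_F k_f(x, y) φ(y) dμ(y), where k_f(x, y) = Σ_{γ ∈ Γ} f(x⁻¹ γ y) χ(γ) (a sum with only finitely many nonzero terms for each fixed x, y). That is, the operator R(f) : φ ↦ (x ↦ ∫_G f(y) φ(xy) dμ(y)) is an integral operator on Γ\G with kernel k_f. -/

import Mathlib

open MeasureTheory

/-- For `f : G → ℂ` continuous with compact support and `φ : G → V`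
continuous and `Γ`-equivariant, and `F` a measurable fundamental domain for the left
translation action of `Γ` on `G`, the operator `R(f)` is an integral operator with
kernel `k_f (x, y) = Σ_{γ ∈ Γ} f (x⁻¹ γ y) χ(γ)`:
`∫_G f y • φ (x y) dμ y = ∫_F k_f (x, y) (φ y) dμ y` for every `x ∈ G`. -/
theorem convolution_is_integral_operator_with_kernel
    {G V : Type*} [Group G] [TopologicalSpace G] [IsTopologicalGroup G]
    [LocallyCompactSpace G] [T2Space G] [SecondCountableTopology G]
    [MeasurableSpace G] [BorelSpace G] (μ : Measure G)
    [μ.IsHaarMeasure] [μ.IsMulRightInvariant]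
    [NormedAddCommGroup V] [NormedSpace ℂ V] [FiniteDimensional ℂ V] [Nontrivial V]
    (Γ : Subgroup G) [DiscreteTopology Γ]
    (hcocompact : ∃ C : Set G, IsCompact C ∧ ∀ g : G, ∃ γ ∈ Γ, γ * g ∈ C)
    (χ : Γ →* (V →ₗ[ℂ] V)ˣ)
    (f : G → ℂ) (hf : Continuous f) (hfsupp : HasCompactSupport f)
    (φ : G → V) (hφ : Continuous φ)
    (hφeq : ∀ (γ : Γ) (g : G), φ ((γ : G) * g) = (χ γ : V →ₗ[ℂ] V) (φ g))
    (F : Set G) (hF : IsFundamentalDomain Γ F μ) :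
    ∀ x : G,
      (∫ y, f y • φ (x * y) ∂μ) =
        ∫ y in F, (∑' γ : Γ, f (x⁻¹ * (γ : G) * y) • (χ γ : V →ₗ[ℂ] V) (φ y)) ∂μ := by
  haveI : CompleteSpace V := FiniteDimensional.complete ℂ V
  haveI : Countable Γ := TopologicalSpace.separableSpace_iff_countable.mp inferInstance
  intro x
  set H : G → V := fun y => f (x⁻¹ * y) • φ y with hH
  -- H is continuous with compact support, hence integrable
  have hHcont : Continuous H := (hf.comp (continuous_const.mul continuous_id)).smul hφ
  have hHsupp : HasCompactSupport H := by
    have h1 : HasCompactSupport fun y => f (x⁻¹ * y) :=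
      hfsupp.comp_homeomorph (Homeomorph.mulLeft x⁻¹)
    exact h1.smul_right
  have hHint : Integrable H μ := hHcont.integrable_of_hasCompactSupport hHsupp
  -- Step 1: change of variables y ↦ x * y
  have step1 : (∫ y, f y • φ (x * y) ∂μ) = ∫ y, H y ∂μ := by
    rw [← integral_mul_left_eq_self H x]
    simp only [hH]
    congr 1
    ext y
    congr 2
    group
  -- Step 2: unfold over the fundamental domain
  have step2 : (∫ y, H y ∂μ) = ∑' γ : Γ, ∫ y in F, H ((γ : G) * y) ∂μ :=
    hF.integral_eq_tsum'' H hHint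
  rw [step1, step2]
  -- Step 3: swap the sum and the integral
  have hterm : ∀ (γ : Γ) (y : G),
      H ((γ : G) * y) = f (x⁻¹ * (γ : G) * y) • (χ γ : V →ₗ[ℂ] V) (φ y) := by
    intro γ y
    simp only [hH, hφeq γ y, mul_assoc]
  have hmeas : ∀ γ : Γ, AEStronglyMeasurable (fun y => H ((γ : G) * y)) (μ.restrict F) :=
    fun γ => (hHcont.comp (continuous_const.mul continuous_id)).aestronglyMeasurable
  have hsum : (∑' γ : Γ, ∫⁻ y in F, ‖H ((γ : G) * y)‖₊ ∂μ) ≠ ⊤ := by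
    have hl : (∫⁻ y, (‖H y‖₊ : ENNReal) ∂μ) =
        ∑' γ : Γ, ∫⁻ y in F, ‖H ((γ : G) * y)‖₊ ∂μ := by
      exact hF.lintegral_eq_tsum'' (fun y => (‖H y‖₊ : ENNReal))
    rw [← hl]
    exact hHint.2.ne
  have := (integral_tsum hmeas hsum).symm
  rw [this]
  congr 1
  ext y
  exact tsum_congr fun γ => hterm γ y
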